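/- arXiv:2511.22024 — 3 statements merged into one kernel-verified Lean document; each statement's English description precedes it below -/
import Mathlib

section
/- For a finite state space, the stochastic contrastive objective admits the integral representation J(θ) = ∫_0^1 E_{s∼ρ_β(·;θ)}[ℓ(s)] dβ. -/
/-- Integral representation of the stochastic contrastive objective:
`J(θ) = ∫_0^1 E_{s∼ρ_β}[ℓ(s)] dβ`. -/
theorem contrastive_objective_eq_integral_expected_loss
    {S : Type*} [Fintype S] [Nonempty S]
    (E : S → ℝ) (ℓ : S → ℝ) (T : ℝ) (hT : 0 < T)
    (Z : ℝ → ℝ) (hZ : ∀ β, Z β = ∑ s, Real.exp (-((E s + β * ℓ s) / T)))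
    (ρ : ℝ → S → ℝ)
    (hρ : ∀ β s, ρ β s = Real.exp (-((E s + β * ℓ s) / T)) / Z β)
    (A : ℝ → ℝ) (hA : ∀ β, A β = -T * Real.log (Z β))
    (J : ℝ) (hJ : J = A 1 - A 0) :
    J = ∫ β in (0:ℝ)..1, ∑ s, ρ β s * ℓ s := by
  have hZpos : ∀ β, 0 < Z β := by
    intro β
    rw [hZ]
    exact Finset.sum_pos (fun s _ => Real.exp_pos _) Finset.univ_nonempty
  -- derivative of Z
  have hZder : ∀ β, HasDerivAt Z
      (∑ s, (-(ℓ s / T)) * Real.exp (-((E s + β * ℓ s) / T))) β := by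
    intro β
    have : HasDerivAt (fun b => ∑ s, Real.exp (-((E s + b * ℓ s) / T)))
        (∑ s, (-(ℓ s / T)) * Real.exp (-((E s + β * ℓ s) / T))) β := by
      apply HasDerivAt.fun_sum
      intro s _
      have h1 : HasDerivAt (fun b : ℝ => -((E s + b * ℓ s) / T)) (-(ℓ s / T)) β := by
        have : HasDerivAt (fun b : ℝ => E s + b * ℓ s) (ℓ s) β := by
          simpa using ((hasDerivAt_id β).mul_const (ℓ s)).const_add (E s)
        simpa [neg_div] using (this.div_const T).fun_neg
      simpa [mul_comm] using h1.exp
    exact this.congr_of_eventuallyEq (by filter_upwards with b using (hZ b))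
  have hAder : ∀ β, HasDerivAt A (∑ s, ρ β s * ℓ s) β := by
    intro β
    have h := ((hZder β).log (hZpos β).ne').const_mul (-T)
    have heq : -T * ((∑ s, (-(ℓ s / T)) * Real.exp (-((E s + β * ℓ s) / T))) / Z β)
        = ∑ s, ρ β s * ℓ s := by
      rw [mul_div_assoc', Finset.mul_sum, Finset.sum_div]
      apply Finset.sum_congr rfl
      intro s _
      rw [hρ]
      field_simp
    have h' : HasDerivAt (fun b => -T * Real.log (Z b)) (∑ s, ρ β s * ℓ s) β := by
      rwa [heq] at h
    exact h'.congr_of_eventuallyEq (by filter_upwards with b using (hA b))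
  have hcont : Continuous fun β => ∑ s, ρ β s * ℓ s := by
    have hZc : Continuous Z := by
      have : Continuous fun b => ∑ s, Real.exp (-((E s + b * ℓ s) / T)) := by
        exact continuous_finset_sum _ fun s _ => by continuity
      exact this.congr (fun b => (hZ b).symm)
    apply continuous_finset_sum
    intro s _
    have : Continuous fun β => Real.exp (-((E s + β * ℓ s) / T)) / Z β * ℓ s := by
      exact (Continuous.div (by continuity) hZc (fun b => (hZpos b).ne')).mul continuous_const
    exact this.congr (fun b => by rw [hρ])
  rw [hJ, ← intervalIntegral.integral_eq_sub_of_hasDerivAt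
    (fun t _ => hAder t) (hcont.intervalIntegrable 0 1)]
end

section
/- For a finite state space with one-dimensional parameter θ, the derivative of the stochastic contrastive objective equals an integrated covariance: J'(θ) = -(1/T)·∫_0^1 Cov_{s∼ρ_β(·;θ)}[ℓ(s), ∂_θ E(θ,s)] dβ. -/
/-- For a one-dimensional parameter `θ`, the derivative of the
stochastic contrastive objective equals an integrated covariance:
`J'(θ) = -(1/T)·∫_0^1 Cov_{ρ_β(·;θ)}[ℓ, ∂_θ E] dβ`. -/
theorem deriv_contrastive_objective_eq_integrated_covariance
    {S : Type*} [Fintype S] [Nonempty S]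
    (E : ℝ → S → ℝ) (ℓ : S → ℝ) (T : ℝ) (hT : 0 < T)
    (E' : ℝ → S → ℝ)
    (hE : ∀ θ s, HasDerivAt (fun θ' => E θ' s) (E' θ s) θ)
    (hE' : ∀ s, Continuous (fun θ => E' θ s))
    (Z : ℝ → ℝ → ℝ)
    (hZ : ∀ β θ, Z β θ = ∑ s, Real.exp (-((E θ s + β * ℓ s) / T)))
    (ρ : ℝ → ℝ → S → ℝ)
    (hρ : ∀ β θ s, ρ β θ s = Real.exp (-((E θ s + β * ℓ s) / T)) / Z β θ)
    (A : ℝ → ℝ → ℝ) (hA : ∀ θ β, A θ β = -T * Real.log (Z β θ))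
    (J : ℝ → ℝ) (hJ : ∀ θ, J θ = A θ 1 - A θ 0)
    (θ : ℝ) :
    HasDerivAt J
      (-(1 / T) * ∫ β in (0:ℝ)..1,
        ((∑ s, ρ β θ s * (ℓ s * E' θ s)) -
          (∑ s, ρ β θ s * ℓ s) * (∑ s, ρ β θ s * E' θ s))) θ := by
  have hT' : T ≠ 0 := ne_of_gt hT
  set f : S → ℝ → ℝ := fun s β => Real.exp (-((E θ s + β * ℓ s) / T)) with hf
  set Zf : ℝ → ℝ := fun β => ∑ s, f s β with hZf
  have hZfpos : ∀ β, 0 < Zf β := fun β =>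
    Finset.sum_pos (fun s _ => Real.exp_pos _) Finset.univ_nonempty
  have hZfne : ∀ β, Zf β ≠ 0 := fun β => (hZfpos β).ne'
  have hρf : ∀ β s, ρ β θ s = f s β / Zf β := by
    intro β s; rw [hρ, hZ]
  set N : ℝ → ℝ := fun β => ∑ s, f s β * E' θ s with hN
  set a : ℝ → ℝ := fun β => ∑ s, f s β * (ℓ s * E' θ s) with ha
  set b : ℝ → ℝ := fun β => ∑ s, f s β * ℓ s with hb
  set C : ℝ → ℝ := fun β => a β / Zf β - (b β / Zf β) * (N β / Zf β) with hC
  have hCov : ∀ β, ((∑ s, ρ β θ s * (ℓ s * E' θ s)) -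
      (∑ s, ρ β θ s * ℓ s) * (∑ s, ρ β θ s * E' θ s)) = C β := by
    intro β
    simp only [hρf, div_mul_eq_mul_div, ← Finset.sum_div, hC, ha, hb, hN]
  -- derivatives in β
  have hfderiv : ∀ s (β : ℝ), HasDerivAt (fun β => f s β) (f s β * (-(ℓ s / T))) β := by
    intro s β
    exact ((((hasDerivAt_mul_const (ℓ s)).const_add (E θ s)).div_const T).neg).exp
  have hZderiv : ∀ β : ℝ, HasDerivAt Zf (-(1 / T) * b β) β := by
    intro β
    have h := HasDerivAt.fun_sum (fun s (_ : s ∈ Finset.univ) => hfderiv s β)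
    refine h.congr_deriv (Eq.symm ?_)
    rw [hb, Finset.mul_sum]
    exact Finset.sum_congr rfl (fun s _ => by ring)
  have hNderiv : ∀ β : ℝ, HasDerivAt N (-(1 / T) * a β) β := by
    intro β
    have h := HasDerivAt.fun_sum (fun s (_ : s ∈ Finset.univ) =>
      (hfderiv s β).mul_const (E' θ s))
    refine h.congr_deriv (Eq.symm ?_)
    rw [ha, Finset.mul_sum]
    exact Finset.sum_congr rfl (fun s _ => by ring)
  have hg : ∀ β : ℝ, HasDerivAt (fun β => N β / Zf β) (-(1 / T) * C β) β := by
    intro β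
    have h := (hNderiv β).fun_div (hZderiv β) (hZfne β)
    refine h.congr_deriv (Eq.symm ?_)
    rw [hC]
    field_simp
    ring
  -- continuity
  have hfc : ∀ s, Continuous fun β => f s β := by
    intro s
    apply Real.continuous_exp.comp
    fun_prop
  have hZc : Continuous Zf := continuous_finset_sum _ (fun s _ => hfc s)
  have hac : Continuous a := continuous_finset_sum _ (fun s _ => (hfc s).mul continuous_const)
  have hbc : Continuous b := continuous_finset_sum _ (fun s _ => (hfc s).mul continuous_const)
  have hNc : Continuous N := continuous_finset_sum _ (fun s _ => (hfc s).mul continuous_const)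
  have hCc : Continuous C :=
    (hac.div hZc hZfne).sub ((hbc.div hZc hZfne).mul (hNc.div hZc hZfne))
  -- FTC
  have hint : (∫ β in (0:ℝ)..1, (-(1 / T) * C β)) = N 1 / Zf 1 - N 0 / Zf 0 :=
    intervalIntegral.integral_eq_sub_of_hasDerivAt (fun β _ => hg β)
      ((continuous_const.mul hCc).intervalIntegrable 0 1)
  have hV : (-(1 / T) * ∫ β in (0:ℝ)..1,
      ((∑ s, ρ β θ s * (ℓ s * E' θ s)) -
        (∑ s, ρ β θ s * ℓ s) * (∑ s, ρ β θ s * E' θ s))) = N 1 / Zf 1 - N 0 / Zf 0 := by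
    rw [intervalIntegral.integral_congr (g := C) (fun β _ => hCov β),
      ← intervalIntegral.integral_const_mul, hint]
  rw [hV]
  -- derivative of J in θ
  have hJfun : J = fun θ' =>
      (-T * Real.log (∑ s, Real.exp (-((E θ' s + 1 * ℓ s) / T)))) -
      (-T * Real.log (∑ s, Real.exp (-((E θ' s + 0 * ℓ s) / T)))) := by
    funext θ'
    rw [hJ, hA, hA, hZ, hZ]
  have hGθ : ∀ β : ℝ, HasDerivAt
      (fun θ' => ∑ s, Real.exp (-((E θ' s + β * ℓ s) / T)))
      (∑ s, f s β * (-(E' θ s / T))) θ := by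
    intro β
    exact HasDerivAt.fun_sum (fun s _ =>
      ((((hE θ s).add_const (β * ℓ s)).div_const T).neg).exp)
  have hlog : ∀ β : ℝ, HasDerivAt
      (fun θ' => -T * Real.log (∑ s, Real.exp (-((E θ' s + β * ℓ s) / T))))
      (N β / Zf β) θ := by
    intro β
    have h := (((hGθ β).log (hZfne β)).const_mul (-T))
    refine h.congr_deriv (Eq.symm ?_)
    have hs : ∑ s, f s β * (-(E' θ s / T)) = -(1 / T) * N β := by
      rw [hN, Finset.mul_sum]
      exact Finset.sum_congr rfl (fun s _ => by ring)
    rw [hs, ← mul_div_assoc]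
    congr 1
    field_simp
  rw [hJfun]
  exact (hlog 1).sub (hlog 0)
end

section
/- First-order expansion recovering Equilibrium Propagation: for a finite state space with one-dimensional parameter θ, the derivative of J at θ satisfies J'(θ) = -(1/T)·Cov_{s∼ρ_0(·;θ)}[ℓ(s), ∂_θ E(θ,s)] + R(θ), where the remainder R(θ) = -(1/T)·∫_0^1 (Cov_{ρ_β}[ℓ, ∂_θ E] - Cov_{ρ_0}[ℓ, ∂_θ E]) dβ vanishes when the covariance Cov_{ρ_β}[ℓ, ∂_θ E] is constant in β. -/
/-- First-order expansion recovering Equilibrium Propagation: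
`J'(θ) = -(1/T)·Cov_{ρ_0}[ℓ, ∂_θ E] + R(θ)` where the remainder
`R(θ) = -(1/T)·∫_0^1 (Cov_{ρ_β}[ℓ, ∂_θ E] - Cov_{ρ_0}[ℓ, ∂_θ E]) dβ`
vanishes when the covariance is constant in `β`. -/
theorem equilibrium_propagation_first_order
    {S : Type*} [Fintype S] [Nonempty S]
    (E : ℝ → S → ℝ) (ℓ : S → ℝ) (T : ℝ) (hT : 0 < T)
    (E' : ℝ → S → ℝ)
    (hE : ∀ θ s, HasDerivAt (fun θ' => E θ' s) (E' θ s) θ)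
    (hE' : ∀ s, Continuous (fun θ => E' θ s))
    (Z : ℝ → ℝ → ℝ)
    (hZ : ∀ β θ, Z β θ = ∑ s, Real.exp (-((E θ s + β * ℓ s) / T)))
    (ρ : ℝ → ℝ → S → ℝ)
    (hρ : ∀ β θ s, ρ β θ s = Real.exp (-((E θ s + β * ℓ s) / T)) / Z β θ)
    (A : ℝ → ℝ → ℝ) (hA : ∀ θ β, A θ β = -T * Real.log (Z β θ))
    (J : ℝ → ℝ) (hJ : ∀ θ, J θ = A θ 1 - A θ 0)
    (Cov : ℝ → ℝ → ℝ)
    (hCov : ∀ β θ, Cov β θ =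
      (∑ s, ρ β θ s * (ℓ s * E' θ s)) -
        (∑ s, ρ β θ s * ℓ s) * (∑ s, ρ β θ s * E' θ s))
    (R : ℝ → ℝ)
    (hR : ∀ θ, R θ = -(1 / T) * ∫ β in (0:ℝ)..1, (Cov β θ - Cov 0 θ))
    (θ : ℝ) :
    HasDerivAt J (-(1 / T) * Cov 0 θ + R θ) θ ∧
      ((∀ β ∈ Set.Icc (0:ℝ) 1, Cov β θ = Cov 0 θ) → R θ = 0) := by
  have hT' : T ≠ 0 := ne_of_gt hT
  have hZpos : ∀ β θ', 0 < Z β θ' := by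
    intro β θ'
    rw [hZ]
    exact Finset.sum_pos (fun s _ => Real.exp_pos _) Finset.univ_nonempty
  set g : ℝ → ℝ := fun β => ∑ s, ρ β θ s * E' θ s with hgdef
  -- derivative of A in θ
  have hA' : ∀ β, HasDerivAt (fun θ' => A θ' β) (g β) θ := by
    intro β
    have hZne : Z β θ ≠ 0 := ne_of_gt (hZpos β θ)
    have hs : ∀ s : S, HasDerivAt (fun θ' => Real.exp (-((E θ' s + β * ℓ s) / T)))
        (Real.exp (-((E θ s + β * ℓ s) / T)) * -(E' θ s / T)) θ := by
      intro s
      exact (((hE θ s).add_const (β * ℓ s)).div_const T).neg.exp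
    have hZθ : HasDerivAt (fun θ' => Z β θ')
        (∑ s, Real.exp (-((E θ s + β * ℓ s) / T)) * -(E' θ s / T)) θ := by
      have hfun : (fun θ' => Z β θ') = fun θ' => ∑ s, Real.exp (-((E θ' s + β * ℓ s) / T)) :=
        funext fun θ' => hZ β θ'
      rw [hfun]
      exact HasDerivAt.fun_sum fun s _ => hs s
    have hd := (hZθ.log hZne).const_mul (-T)
    have hfunA : (fun θ' => A θ' β) = fun θ' => -T * Real.log (Z β θ') :=
      funext fun θ' => hA θ' β
    rw [hfunA]
    refine hd.congr_deriv (Eq.symm ?_)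
    simp only [hgdef]
    have hrho : ∀ s : S, ρ β θ s * E' θ s
        = Real.exp (-((E θ s + β * ℓ s) / T)) * E' θ s / Z β θ := fun s => by
      rw [hρ]; ring
    simp only [hrho]
    rw [← Finset.sum_div]
    have hnum : ∑ s, Real.exp (-((E θ s + β * ℓ s) / T)) * -(E' θ s / T)
        = -(1/T) * ∑ s, Real.exp (-((E θ s + β * ℓ s) / T)) * E' θ s := by
      rw [Finset.mul_sum]
      exact Finset.sum_congr rfl fun s _ => by ring
    rw [hnum]
    field_simp
  -- J derivative
  have hJ' : HasDerivAt J (g 1 - g 0) θ := by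
    have hfunJ : J = fun θ' => A θ' 1 - A θ' 0 := funext hJ
    rw [hfunJ]
    exact (hA' 1).sub (hA' 0)
  -- derivative of g in β
  have hg' : ∀ β, HasDerivAt g (-(1/T) * Cov β θ) β := by
    intro β
    have hZne : Z β θ ≠ 0 := ne_of_gt (hZpos β θ)
    have hnum : ∀ s : S, HasDerivAt (fun β' => Real.exp (-((E θ s + β' * ℓ s) / T)))
        (Real.exp (-((E θ s + β * ℓ s) / T)) * -(ℓ s / T)) β := by
      intro s
      have h0 : HasDerivAt (fun β' : ℝ => E θ s + β' * ℓ s) (ℓ s) β := by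
        simpa using (hasDerivAt_mul_const (ℓ s)).const_add (E θ s)
      exact ((h0.div_const T).neg).exp
    have hZβ : HasDerivAt (fun β' => Z β' θ)
        (∑ s, Real.exp (-((E θ s + β * ℓ s) / T)) * -(ℓ s / T)) β := by
      have hfun : (fun β' => Z β' θ) = fun β' => ∑ s, Real.exp (-((E θ s + β' * ℓ s) / T)) :=
        funext fun β' => hZ β' θ
      rw [hfun]
      exact HasDerivAt.fun_sum fun s _ => hnum s
    have hρβ : ∀ s : S, HasDerivAt (fun β' => ρ β' θ s)
        ((Real.exp (-((E θ s + β * ℓ s) / T)) * -(ℓ s / T) * Z β θ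
          - Real.exp (-((E θ s + β * ℓ s) / T))
            * (∑ t, Real.exp (-((E θ t + β * ℓ t) / T)) * -(ℓ t / T))) / (Z β θ)^2) β := by
      intro s
      have hfun : (fun β' => ρ β' θ s)
          = fun β' => Real.exp (-((E θ s + β' * ℓ s) / T)) / Z β' θ :=
        funext fun β' => hρ β' θ s
      rw [hfun]
      exact (hnum s).div hZβ hZne
    have hgβ := HasDerivAt.fun_sum (fun s (_ : s ∈ Finset.univ) => (hρβ s).mul_const (E' θ s))
    refine hgβ.congr_deriv (Eq.symm ?_)
    -- algebra: show -(1/T) * Cov β θ equals the explicit sum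
    rw [hCov]
    set Zv := Z β θ with hZv
    set P := ∑ s, Real.exp (-((E θ s + β * ℓ s) / T)) * (ℓ s * E' θ s) with hP
    set Q := ∑ s, Real.exp (-((E θ s + β * ℓ s) / T)) * ℓ s with hQ
    set W := ∑ s, Real.exp (-((E θ s + β * ℓ s) / T)) * E' θ s with hW
    have hinner : (∑ t, Real.exp (-((E θ t + β * ℓ t) / T)) * -(ℓ t / T)) = -(1/T) * Q := by
      rw [hQ, Finset.mul_sum]
      exact Finset.sum_congr rfl fun t _ => by ring
    have hRHS : (∑ s, ((Real.exp (-((E θ s + β * ℓ s) / T)) * -(ℓ s / T) * Zv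
          - Real.exp (-((E θ s + β * ℓ s) / T))
            * (∑ t, Real.exp (-((E θ t + β * ℓ t) / T)) * -(ℓ t / T))) / Zv^2) * E' θ s)
        = -(1/T) * ((P * Zv - Q * W) / Zv^2) := by
      rw [hinner]
      calc (∑ s, ((Real.exp (-((E θ s + β * ℓ s) / T)) * -(ℓ s / T) * Zv
              - Real.exp (-((E θ s + β * ℓ s) / T)) * (-(1/T) * Q)) / Zv^2) * E' θ s)
          = ∑ s, -(1/T)/Zv^2 * (Real.exp (-((E θ s + β * ℓ s) / T)) * (ℓ s * E' θ s) * Zv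
              - Q * (Real.exp (-((E θ s + β * ℓ s) / T)) * E' θ s)) :=
            Finset.sum_congr rfl fun s _ => by ring
        _ = -(1/T)/Zv^2 * ∑ s, (Real.exp (-((E θ s + β * ℓ s) / T)) * (ℓ s * E' θ s) * Zv
              - Q * (Real.exp (-((E θ s + β * ℓ s) / T)) * E' θ s)) :=
            (Finset.mul_sum _ _ _).symm
        _ = -(1/T)/Zv^2 * (P * Zv - Q * W) := by
            rw [Finset.sum_sub_distrib, ← Finset.sum_mul, ← Finset.mul_sum, hP, hW]
        _ = -(1/T) * ((P * Zv - Q * W) / Zv^2) := by ring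
    rw [hRHS]
    have hρe : ∀ s : S, ρ β θ s = Real.exp (-((E θ s + β * ℓ s) / T)) / Zv :=
      fun s => hρ β θ s
    simp only [hρe, div_mul_eq_mul_div, ← Finset.sum_div, ← hP, ← hQ, ← hW]
    field_simp
  -- continuity of Cov in β
  have hec : ∀ s : S, Continuous (fun β => Real.exp (-((E θ s + β * ℓ s) / T))) := by
    intro s
    exact Real.continuous_exp.comp
      (((continuous_const.add (continuous_id.mul continuous_const)).div_const T).neg)
  have hZc : Continuous (fun β => Z β θ) := by
    have hfun : (fun β => Z β θ) = fun β => ∑ s, Real.exp (-((E θ s + β * ℓ s) / T)) :=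
      funext fun β => hZ β θ
    rw [hfun]
    exact continuous_finset_sum _ fun s _ => hec s
  have hρc : ∀ s : S, Continuous (fun β => ρ β θ s) := by
    intro s
    have hfun : (fun β => ρ β θ s) = fun β => Real.exp (-((E θ s + β * ℓ s) / T)) / Z β θ :=
      funext fun β => hρ β θ s
    rw [hfun]
    exact (hec s).div hZc fun β => ne_of_gt (hZpos β θ)
  have hCovc : Continuous (fun β => Cov β θ) := by
    have hfun : (fun β => Cov β θ) = fun β =>
        (∑ s, ρ β θ s * (ℓ s * E' θ s)) -
          (∑ s, ρ β θ s * ℓ s) * (∑ s, ρ β θ s * E' θ s) :=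
      funext fun β => hCov β θ
    rw [hfun]
    exact ((continuous_finset_sum _ fun s _ => (hρc s).mul continuous_const).sub
      ((continuous_finset_sum _ fun s _ => (hρc s).mul continuous_const).mul
        (continuous_finset_sum _ fun s _ => (hρc s).mul continuous_const)))
  have hInt : IntervalIntegrable (fun β => Cov β θ) MeasureTheory.volume 0 1 :=
    hCovc.intervalIntegrable 0 1
  have hFTC : (∫ β in (0:ℝ)..1, -(1/T) * Cov β θ) = g 1 - g 0 :=
    intervalIntegral.integral_eq_sub_of_hasDerivAt (fun t _ => hg' t)
      ((continuous_const.mul hCovc).intervalIntegrable 0 1)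
  constructor
  · have hkey : -(1 / T) * Cov 0 θ + R θ = g 1 - g 0 := by
      rw [hR, intervalIntegral.integral_sub hInt intervalIntegrable_const,
        intervalIntegral.integral_const, ← hFTC, intervalIntegral.integral_const_mul]
      simp
      ring
    rw [hkey]
    exact hJ'
  · intro h
    rw [hR]
    have hzero : (∫ β in (0:ℝ)..1, (Cov β θ - Cov 0 θ)) = 0 := by
      have : ∫ β in (0:ℝ)..1, (Cov β θ - Cov 0 θ) = ∫ _ in (0:ℝ)..1, (0:ℝ) := by
        apply intervalIntegral.integral_congr
        intro β hβ
        rw [Set.uIcc_of_le (by norm_num)] at hβ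
        simp [h β hβ]
      rw [this]
      simp
    rw [hzero]
    ring
end
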